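/- Let n, r be positive integers. For all a_1 ∈ {0,…,n−1} and a_2 ∈ {0,…,r−1}, |T_{a_1,a_2}(n,r)| ≤ |T_{0,0}(n,r)|, and moreover |T_{0,0}(n,r)| = (1/(nr)) ∑_{d | n, d ≥ 1} φ(d)·r^{n/d}·gcd(r,d), where φ is Euler's totient function. -/

import Mathlib

open scoped Classical
open Finset

/-- `γ(x) = ∑_{i=1}^{n-1} i·𝟙{x_i > x_{i+1}}` (1-indexed). -/
noncomputable def gam {n r : ℕ} (x : Fin n → Fin r) : ℕ :=
  ∑ i : Fin n, if h : (i : ℕ) + 1 < n then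
      (if (x ⟨(i : ℕ) + 1, h⟩ : ℕ) < (x i : ℕ) then (i : ℕ) + 1 else 0) else 0

/-- `σ(x) = ∑ x_i`. -/
noncomputable def sig {n r : ℕ} (x : Fin n → Fin r) : ℕ := ∑ i : Fin n, (x i : ℕ)

/-- The non-binary Tenengolts code `T_{a₁,a₂}(n,r)`. -/
noncomputable def Tcode (n r a₁ a₂ : ℕ) : Finset (Fin n → Fin r) :=
  Finset.univ.filter (fun x : Fin n → Fin r => gam x ≡ a₁ [MOD n] ∧ sig x ≡ a₂ [MOD r])

section GeomX
lemma geom_root (N : ℕ) (w : ℂ) (h : w ^ N = 1) :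
    ∑ t ∈ range N, w ^ t = if w = 1 then (N : ℂ) else 0 := by
  split_ifs with hw
  · simp [hw, card_range]
  · rw [geom_sum_eq hw, h]; simp
end GeomX

section Rot

variable {d r : ℕ}

def Xv (hd : 0 < d) (x : Fin d → Fin r) (i : ℕ) : ℕ := (x ⟨i % d, Nat.mod_lt _ hd⟩ : ℕ)

def cc (hd : 0 < d) (x : Fin d → Fin r) (i : ℕ) : ℕ := if Xv hd x (i+1) < Xv hd x i then 1 else 0

def DD (hd : 0 < d) (x : Fin d → Fin r) : ℕ := ∑ i ∈ range d, cc hd x i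

def LL (hd : 0 < d) (x : Fin d → Fin r) : Fin d → Fin r :=
  fun i => x ⟨((i : ℕ) + 1) % d, Nat.mod_lt _ hd⟩

variable (hd : 0 < d) (x : Fin d → Fin r)

lemma Xv_congr {i j : ℕ} (h : i % d = j % d) : Xv hd x i = Xv hd x j := by
  unfold Xv
  have e : (⟨i % d, Nat.mod_lt _ hd⟩ : Fin d) = ⟨j % d, Nat.mod_lt _ hd⟩ := Fin.ext h
  rw [e]

lemma Xv_eq_val {i : ℕ} (h : i < d) : Xv hd x i = (x ⟨i, h⟩ : ℕ) := by
  unfold Xv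
  have e : (⟨i % d, Nat.mod_lt _ hd⟩ : Fin d) = ⟨i, h⟩ := Fin.ext (Nat.mod_eq_of_lt h)
  rw [e]

lemma Xv_add_d (i : ℕ) : Xv hd x (i + d) = Xv hd x i :=
  Xv_congr hd x (Nat.add_mod_right i d)

lemma Xv_apply (i : Fin d) : Xv hd x (i : ℕ) = (x i : ℕ) := by
  rw [Xv_eq_val hd x i.isLt, Fin.eta]

lemma Xv_LL (i : ℕ) : Xv hd (LL hd x) i = Xv hd x (i + 1) := by
  unfold Xv LL
  exact congrArg _ (congrArg x (Fin.ext (Nat.mod_add_mod i d 1)))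

lemma cc_LL (i : ℕ) : cc hd (LL hd x) i = cc hd x (i + 1) := by
  unfold cc; rw [Xv_LL, Xv_LL]

lemma cc_add_d (i : ℕ) : cc hd x (i + d) = cc hd x i := by
  unfold cc
  rw [show i + d + 1 = (i+1) + d by omega, Xv_add_d, Xv_add_d]

lemma gam_eq_range : gam x = ∑ i ∈ range (d - 1), (i + 1) * cc hd x i := by
  have h1 : gam x = ∑ i ∈ range d,
      (fun m => if h : m + 1 < d then (if Xv hd x (m+1) < Xv hd x m then m + 1 else 0) else 0) i := by
    rw [gam, ← Fin.sum_univ_eq_sum_range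
      (fun m => if h : m + 1 < d then (if Xv hd x (m+1) < Xv hd x m then m + 1 else 0) else 0) d]
    apply Finset.sum_congr rfl
    intro i _
    by_cases h : (i : ℕ) + 1 < d
    · rw [dif_pos h, dif_pos h, Xv_eq_val hd x h, Xv_apply]
    · rw [dif_neg h, dif_neg h]
  obtain ⟨e, rfl⟩ : ∃ e, d = e + 1 := ⟨d - 1, by omega⟩
  rw [h1, Finset.sum_range_succ, dif_neg (by omega : ¬ (e + 1 < e + 1)), add_zero]
  simp only [Nat.add_sub_cancel]
  apply Finset.sum_congr rfl
  intro i hi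
  rw [Finset.mem_range] at hi
  rw [dif_pos (by omega)]
  unfold cc
  split_ifs <;> omega

lemma key_rot : gam (LL hd x) + DD hd x = gam x + d * cc hd x (d - 1) := by
  obtain ⟨e, rfl⟩ : ∃ e, d = e + 1 := ⟨d - 1, by omega⟩
  have hL : gam (LL hd x) = ∑ i ∈ range (e+1), i * cc hd x i := by
    rw [gam_eq_range hd (LL hd x)]
    simp only [Nat.add_sub_cancel, cc_LL]
    rw [Finset.sum_range_succ' (fun i => i * cc hd x i) e]
    simp
  have hR : gam x + (e+1) * cc hd x (e+1-1) = ∑ i ∈ range (e+1), (i + 1) * cc hd x i := by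
    rw [gam_eq_range hd x]
    simp only [Nat.add_sub_cancel]
    rw [Finset.sum_range_succ]
  rw [hL, hR, DD, ← Finset.sum_add_distrib]
  apply Finset.sum_congr rfl
  intro i _
  ring

lemma DD_LL : DD hd (LL hd x) = DD hd x := by
  obtain ⟨e, rfl⟩ : ∃ e, d = e + 1 := ⟨d - 1, by omega⟩
  unfold DD
  simp only [cc_LL]
  rw [Finset.sum_range_succ, Finset.sum_range_succ' (cc hd x) e]
  congr 1
  have := cc_add_d hd x 0
  rw [zero_add] at this
  exact this

lemma sig_LL : sig (LL hd x) = sig x := by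
  unfold sig LL
  have hbij : Function.Bijective (fun i : Fin d => (⟨((i:ℕ)+1) % d, Nat.mod_lt _ hd⟩ : Fin d)) := by
    rw [Fintype.bijective_iff_injective_and_card]
    refine ⟨fun i j hij => ?_, rfl⟩
    have hv := congrArg Fin.val hij
    simp only at hv
    have hi := i.isLt; have hj := j.isLt
    apply Fin.ext
    rcases Nat.lt_or_ge ((i:ℕ)+1) d with h | h <;> rcases Nat.lt_or_ge ((j:ℕ)+1) d with h' | h'
    · rw [Nat.mod_eq_of_lt h, Nat.mod_eq_of_lt h'] at hv; omega
    · rw [Nat.mod_eq_of_lt h, show (j:ℕ)+1 = d by omega, Nat.mod_self] at hv; omega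
    · rw [Nat.mod_eq_of_lt h', show (i:ℕ)+1 = d by omega, Nat.mod_self] at hv; omega
    · omega
  exact hbij.sum_comp (fun i => (x i : ℕ))

lemma LL_bijective : Function.Bijective (LL hd (r := r)) := by
  rw [Fintype.bijective_iff_injective_and_card]
  refine ⟨fun x y hxy => ?_, rfl⟩
  funext j
  have h := congrFun hxy ⟨((j:ℕ) + (d-1)) % d, Nat.mod_lt _ hd⟩
  unfold LL at h
  have e : ((((j:ℕ) + (d-1)) % d) + 1) % d = (j:ℕ) := by
    rw [Nat.mod_add_mod, show (j:ℕ) + (d-1) + 1 = (j:ℕ) + d by omega,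
      Nat.add_mod_right, Nat.mod_eq_of_lt j.isLt]
  have e2 : (⟨((((j:ℕ) + (d-1)) % d : ℕ) + 1) % d, Nat.mod_lt _ hd⟩ : Fin d) = j := Fin.ext e
  rw [e2] at h
  exact h

lemma DD_lt : DD hd x < d := by
  by_contra hcon
  push_neg at hcon
  have hle : ∀ i ∈ range d, cc hd x i ≤ 1 := by
    intro i _; unfold cc; split_ifs <;> omega
  have hall : ∀ i ∈ range d, cc hd x i = 1 := by
    by_contra hex
    push_neg at hex
    obtain ⟨i0, hi0, hne⟩ := hex
    have h0 : cc hd x i0 = 0 := by have := hle i0 hi0; omega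
    have hsplit : ∑ i ∈ (range d).erase i0, cc hd x i + cc hd x i0 = DD hd x :=
      Finset.sum_erase_add _ _ hi0
    have hb : ∑ i ∈ (range d).erase i0, cc hd x i ≤ ((range d).erase i0).card • 1 :=
      Finset.sum_le_card_nsmul _ _ _ (fun i hi => hle i (Finset.mem_of_mem_erase hi))
    rw [Finset.card_erase_of_mem hi0, Finset.card_range, smul_eq_mul, mul_one] at hb
    omega
  have hdec : ∀ i, i < d → Xv hd x (i+1) < Xv hd x i := by
    intro i hi
    have hcc := hall i (Finset.mem_range.2 hi)
    unfold cc at hcc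
    by_contra hcon2
    rw [if_neg hcon2] at hcc
    exact absurd hcc (by omega)
  have hchain : ∀ t, t ≤ d → Xv hd x t + t ≤ Xv hd x 0 := by
    intro t
    induction t with
    | zero => omega
    | succ s ih =>
      intro hs
      have h1 := hdec s (by omega)
      have h2 := ih (by omega)
      omega
  have hfin := hchain d le_rfl
  have hxd : Xv hd x d = Xv hd x 0 := by
    have := Xv_add_d hd x 0
    rw [zero_add] at this
    exact this
  omega

lemma DD_zero_const (h : DD hd x = 0) : ∀ i : Fin d, x i = x ⟨0, hd⟩ := by
  have hc : ∀ i ∈ range d, cc hd x i = 0 := Finset.sum_eq_zero_iff.1 h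
  have hstep : ∀ i, i < d → ¬ (Xv hd x (i+1) < Xv hd x i) := by
    intro i hi
    have hcc := hc i (Finset.mem_range.2 hi)
    unfold cc at hcc
    intro hlt
    rw [if_pos hlt] at hcc
    exact absurd hcc (by omega)
  have hmono : ∀ t, t ≤ d → ∀ s, s ≤ t → Xv hd x s ≤ Xv hd x t := by
    intro t
    induction t with
    | zero =>
      intro _ s hs
      have hs0 : s = 0 := by omega
      rw [hs0]
    | succ u ih =>
      intro ht s hs
      rcases Nat.lt_or_ge s (u+1) with h' | h'
      · have h1 : Xv hd x s ≤ Xv hd x u := ih (by omega) s (by omega)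
        have h2 := hstep u (by omega)
        omega
      · have hse : s = u + 1 := by omega
        rw [hse]
  intro i
  have h1 : Xv hd x (i : ℕ) ≤ Xv hd x d := hmono d le_rfl _ (le_of_lt i.isLt)
  have h2 : Xv hd x 0 ≤ Xv hd x (i : ℕ) := hmono (i:ℕ) (le_of_lt i.isLt) 0 (by omega)
  have h3 : Xv hd x d = Xv hd x 0 := by
    have := Xv_add_d hd x 0; rw [zero_add] at this; exact this
  have h4 : Xv hd x (i:ℕ) = Xv hd x 0 := by omega
  rw [Xv_apply] at h4
  have h0 : Xv hd x 0 = (x ⟨0, hd⟩ : ℕ) := Xv_eq_val hd x hd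
  rw [h0] at h4
  exact Fin.val_injective h4

lemma DD_zero_gam (h : DD hd x = 0) : gam x = 0 := by
  have hc : ∀ i ∈ range d, cc hd x i = 0 := Finset.sum_eq_zero_iff.1 h
  rw [gam_eq_range hd x]
  apply Finset.sum_eq_zero
  intro i hi
  rw [Finset.mem_range] at hi
  rw [hc i (Finset.mem_range.2 (by omega)), mul_zero]

end Rot

section Tdv
variable {d r : ℕ}

lemma Td_val (hd : 0 < d) (ζ ξ : ℂ) (hζ1 : ζ ^ d = 1) (hζ2 : ∀ t, ζ ^ t = 1 → d ∣ t)
    (hξ : ξ ^ r = 1) :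
    ∑ x : Fin d → Fin r, ζ ^ gam x * ξ ^ sig x
      = if ξ ^ d = 1 then (r : ℂ) else 0 := by
  have hζ0 : ζ ≠ 0 := by
    intro h
    rw [h, zero_pow hd.ne'] at hζ1
    exact one_ne_zero hζ1.symm
  -- invariance under iterates
  have hDit : ∀ t (x : Fin d → Fin r), DD hd ((LL hd)^[t] x) = DD hd x := by
    intro t
    induction t with
    | zero => intro x; rfl
    | succ t ih =>
      intro x
      rw [Function.iterate_succ_apply, ih (LL hd x), DD_LL]
  have hsit : ∀ t (x : Fin d → Fin r), sig ((LL hd)^[t] x) = sig x := by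
    intro t
    induction t with
    | zero => intro x; rfl
    | succ t ih =>
      intro x
      rw [Function.iterate_succ_apply, ih (LL hd x), sig_LL]
  have hkey : ∀ (x : Fin d → Fin r) t, ζ ^ gam ((LL hd)^[t] x) * (ζ ^ DD hd x) ^ t = ζ ^ gam x := by
    intro x t
    induction t with
    | zero => simp
    | succ t ih =>
      have hy := key_rot hd ((LL hd)^[t] x)
      have hz : ζ ^ gam (LL hd ((LL hd)^[t] x)) * ζ ^ DD hd ((LL hd)^[t] x)
          = ζ ^ gam ((LL hd)^[t] x) := by
        rw [← pow_add, hy, pow_add, pow_mul, hζ1, one_pow, mul_one]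
      rw [Function.iterate_succ_apply', pow_succ]
      calc ζ ^ gam (LL hd ((LL hd)^[t] x)) * ((ζ ^ DD hd x) ^ t * ζ ^ DD hd x)
          = (ζ ^ gam (LL hd ((LL hd)^[t] x)) * ζ ^ DD hd ((LL hd)^[t] x)) * (ζ ^ DD hd x) ^ t := by
            rw [hDit t x]; ring
        _ = ζ ^ gam ((LL hd)^[t] x) * (ζ ^ DD hd x) ^ t := by rw [hz]
        _ = ζ ^ gam x := ih
  have hexp : ∀ (x : Fin d → Fin r) t, ζ ^ gam ((LL hd)^[t] x)
      = ζ ^ gam x * ((ζ ^ DD hd x)⁻¹) ^ t := by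
    intro x t
    rw [inv_pow, ← div_eq_mul_inv, eq_comm, div_eq_iff (pow_ne_zero _ (pow_ne_zero _ hζ0))]
    exact (hkey x t).symm
  have hmain : (d : ℂ) * (∑ x : Fin d → Fin r, ζ ^ gam x * ξ ^ sig x)
      = ∑ x : Fin d → Fin r, (if DD hd x = 0 then (d:ℂ) * ξ ^ sig x else 0) := by
    calc (d : ℂ) * (∑ x : Fin d → Fin r, ζ ^ gam x * ξ ^ sig x)
        = ∑ _t ∈ range d, ∑ x : Fin d → Fin r, ζ ^ gam x * ξ ^ sig x := by
          rw [Finset.sum_const, card_range, nsmul_eq_mul]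
      _ = ∑ t ∈ range d, ∑ x : Fin d → Fin r,
            ζ ^ gam ((LL hd)^[t] x) * ξ ^ sig ((LL hd)^[t] x) := by
          refine Finset.sum_congr rfl fun t _ => ?_
          exact (((LL_bijective hd).iterate t).sum_comp fun y => ζ ^ gam y * ξ ^ sig y).symm
      _ = ∑ x : Fin d → Fin r, ∑ t ∈ range d,
            (ζ ^ gam x * ξ ^ sig x) * ((ζ ^ DD hd x)⁻¹) ^ t := by
          rw [Finset.sum_comm]
          refine Finset.sum_congr rfl fun x _ => Finset.sum_congr rfl fun t _ => ?_
          rw [hexp x t, hsit t x]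
          ring
      _ = ∑ x : Fin d → Fin r, (ζ ^ gam x * ξ ^ sig x) *
            (if (ζ ^ DD hd x)⁻¹ = 1 then (d:ℂ) else 0) := by
          refine Finset.sum_congr rfl fun x _ => ?_
          rw [← Finset.mul_sum, geom_root d _ (by
            rw [inv_pow, ← pow_mul, mul_comm, pow_mul, hζ1, one_pow, inv_one])]
      _ = ∑ x : Fin d → Fin r, (if DD hd x = 0 then (d:ℂ) * ξ ^ sig x else 0) := by
          refine Finset.sum_congr rfl fun x _ => ?_
          have hcond : ((ζ ^ DD hd x)⁻¹ = 1) ↔ DD hd x = 0 := by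
            rw [inv_eq_one]
            constructor
            · intro h1
              exact Nat.eq_zero_of_dvd_of_lt (hζ2 _ h1) (DD_lt hd x)
            · intro h0; rw [h0, pow_zero]
          by_cases h0 : DD hd x = 0
          · rw [if_pos (hcond.2 h0), if_pos h0, DD_zero_gam hd x h0, pow_zero, one_mul]
            ring
          · rw [if_neg (fun hh => h0 (hcond.1 hh)), if_neg h0, mul_zero]
  -- the surviving terms: constant words
  have hconst : ∑ x : Fin d → Fin r, (if DD hd x = 0 then (d:ℂ) * ξ ^ sig x else 0)
      = (d:ℂ) * ∑ a ∈ range r, (ξ ^ d) ^ a := by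
    rw [← Finset.sum_filter]
    have hset : Finset.univ.filter (fun x : Fin d → Fin r => DD hd x = 0)
        = Finset.image (fun a : Fin r => (fun _ : Fin d => a)) Finset.univ := by
      ext x
      simp only [Finset.mem_filter, Finset.mem_univ, true_and, Finset.mem_image]
      constructor
      · intro h0
        exact ⟨x ⟨0, hd⟩, (funext fun i => (DD_zero_const hd x h0 i)).symm⟩
      · rintro ⟨a, -, rfl⟩
        unfold DD
        apply Finset.sum_eq_zero
        intro i _
        unfold cc
        rw [if_neg (by unfold Xv; exact lt_irrefl _)]
    rw [hset, Finset.sum_image (fun a _ b _ h => congrFun h ⟨0, hd⟩)]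
    have hsigc : ∀ a : Fin r, sig (fun _ : Fin d => a) = d * (a : ℕ) := by
      intro a
      unfold sig
      rw [Finset.sum_const, Finset.card_univ, Fintype.card_fin, smul_eq_mul]
    rw [Finset.mul_sum]
    rw [← Fin.sum_univ_eq_sum_range (fun a => (d : ℂ) * (ξ ^ d) ^ a) r]
    refine Finset.sum_congr rfl fun a _ => ?_
    rw [hsigc a, pow_mul]
  have hdC : (d : ℂ) ≠ 0 := Nat.cast_ne_zero.2 hd.ne'
  have := hmain.trans hconst
  have hT := mul_left_cancel₀ hdC this
  rw [hT]
  exact geom_root r (ξ ^ d) (by rw [← pow_mul, mul_comm, pow_mul, hξ, one_pow])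

end Tdv

section Blocks

variable {a b r : ℕ}

def app (y : Fin a → Fin r) (z : Fin b → Fin r) : Fin (a + b) → Fin r :=
  fun i => if h : (i : ℕ) < a then y ⟨i, h⟩ else z ⟨(i : ℕ) - a, by omega⟩

variable (y : Fin a → Fin r) (z : Fin b → Fin r)

lemma app_val_left {j : ℕ} (hj : j < a) (h' : j < a + b) :
    app y z ⟨j, h'⟩ = y ⟨j, hj⟩ := by
  simp only [app]
  split_ifs with h
  · rfl

lemma app_val_right {j : ℕ} (hj : j < b) (h' : a + j < a + b) :
    app y z ⟨a + j, h'⟩ = z ⟨j, hj⟩ := by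
  simp only [app]
  split_ifs with h
  · exact absurd h (by omega)
  · exact congrArg z (Fin.ext (by simp))

lemma Xv_app_left (hab : 0 < a + b) (ha : 0 < a) {j : ℕ} (hj : j < a) :
    Xv hab (app y z) j = Xv ha y j := by
  rw [Xv_eq_val hab _ (by omega : j < a + b), Xv_eq_val ha y hj,
    app_val_left y z hj]

lemma Xv_app_right (hab : 0 < a + b) (hb : 0 < b) {j : ℕ} (hj : j < b) :
    Xv hab (app y z) (a + j) = Xv hb z j := by
  rw [Xv_eq_val hab _ (by omega : a + j < a + b), Xv_eq_val hb z hj,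
    app_val_right y z hj]

lemma sig_eq_range {n : ℕ} (hn : 0 < n) (x : Fin n → Fin r) :
    sig x = ∑ i ∈ range n, Xv hn x i := by
  rw [sig, ← Fin.sum_univ_eq_sum_range (Xv hn x) n]
  exact Finset.sum_congr rfl fun i _ => (Xv_apply hn x i).symm

lemma sig_app (ha : 0 < a) (hb : 0 < b) : sig (app y z) = sig y + sig z := by
  rw [sig_eq_range (by omega : 0 < a + b) (app y z), sig_eq_range ha y, sig_eq_range hb z,
    Finset.sum_range_add]
  congr 1
  · exact Finset.sum_congr rfl fun i hi => Xv_app_left y z _ ha (Finset.mem_range.1 hi)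
  · exact Finset.sum_congr rfl fun i hi => Xv_app_right y z _ hb (Finset.mem_range.1 hi)

lemma gam_app (ha : 0 < a) (hb : 0 < b) :
    ∃ c : ℕ, gam (app y z) = gam y + gam z + a * c := by
  obtain ⟨a', rfl⟩ : ∃ a', a = a' + 1 := ⟨a - 1, by omega⟩
  obtain ⟨t, rfl⟩ : ∃ t, b = t + 1 := ⟨b - 1, by omega⟩
  have hab : (0:ℕ) < a' + 1 + (t + 1) := by omega
  rw [gam_eq_range hab (app y z), gam_eq_range ha y, gam_eq_range hb z]
  simp only [Nat.add_sub_cancel]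
  have hbound : a' + 1 + (t + 1) - 1 = (a' + 1) + t := by omega
  rw [hbound, Finset.sum_range_add, Finset.sum_range_succ]
  -- descent indicators of app agree with those of y and z away from the junction
  have hccl : ∀ i, i < a' → cc hab (app y z) i = cc ha y i := by
    intro i hi
    unfold cc
    rw [Xv_app_left y z hab ha (by omega), Xv_app_left y z hab ha (by omega)]
  have hccr : ∀ i, i < t → cc hab (app y z) (a' + 1 + i) = cc hb z i := by
    intro i hi
    unfold cc
    rw [show a' + 1 + i + 1 = a' + 1 + (i + 1) by omega,
      Xv_app_right y z hab hb (by omega : i + 1 < t + 1),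
      Xv_app_right y z hab hb (by omega : i < t + 1)]
  refine ⟨cc hab (app y z) a' + ∑ i ∈ range t, cc hab (app y z) (a' + 1 + i), ?_⟩
  have h1 : ∑ i ∈ range a', (i + 1) * cc hab (app y z) i
      = ∑ i ∈ range a', (i + 1) * cc ha y i :=
    Finset.sum_congr rfl fun i hi => by rw [hccl i (Finset.mem_range.1 hi)]
  have h2 : ∑ i ∈ range t, (a' + 1 + i + 1) * cc hab (app y z) (a' + 1 + i)
      = ∑ i ∈ range t, ((i + 1) * cc hb z i + (a' + 1) * cc hab (app y z) (a' + 1 + i)) :=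
    Finset.sum_congr rfl fun i hi => by
      rw [show a' + 1 + i + 1 = (i + 1) + (a' + 1) by omega, add_mul,
        hccr i (Finset.mem_range.1 hi)]
  rw [h1, h2, Finset.sum_add_distrib, ← Finset.mul_sum]
  ring

lemma sum_app (f : (Fin (a + b) → Fin r) → ℂ) :
    ∑ x : Fin (a + b) → Fin r, f x
      = ∑ y : Fin a → Fin r, ∑ z : Fin b → Fin r, f (app y z) := by
  have hbij : Function.Bijective
      (fun p : (Fin a → Fin r) × (Fin b → Fin r) => app p.1 p.2) := by
    constructor
    · rintro ⟨y1, z1⟩ ⟨y2, z2⟩ h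
      simp only at h
      have hy : y1 = y2 := by
        funext i
        have h1 := congrFun h ⟨(i : ℕ), by omega⟩
        rw [app_val_left y1 z1 i.isLt, app_val_left y2 z2 i.isLt] at h1
        exact h1
      have hz : z1 = z2 := by
        funext i
        have h1 := congrFun h ⟨a + (i : ℕ), by omega⟩
        rw [app_val_right y1 z1 i.isLt, app_val_right y2 z2 i.isLt] at h1
        exact h1
      rw [Prod.mk.injEq]
      exact ⟨hy, hz⟩
    · intro x
      refine ⟨(fun j => x ⟨(j : ℕ), by omega⟩, fun j => x ⟨a + (j : ℕ), by omega⟩), ?_⟩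
      funext i
      simp only [app]
      split_ifs with h
      · exact congrArg x (Fin.ext rfl)
      · exact congrArg x (Fin.ext (by simp only [Fin.val_mk]; omega))
  calc ∑ x : Fin (a + b) → Fin r, f x
      = ∑ p : (Fin a → Fin r) × (Fin b → Fin r), f (app p.1 p.2) := (hbij.sum_comp f).symm
    _ = ∑ y : Fin a → Fin r, ∑ z : Fin b → Fin r, f (app y z) :=
      Fintype.sum_prod_type _

lemma gam_app0 (y : Fin a → Fin r) (z : Fin 0 → Fin r) (ha : 0 < a) :
    gam (app y z) = gam y := by
  have hab : 0 < a + 0 := by omega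
  rw [gam_eq_range hab (app y z), gam_eq_range ha y]
  refine Finset.sum_congr rfl fun i hi => ?_
  rw [Finset.mem_range] at hi
  unfold cc
  rw [Xv_app_left y z hab ha (by omega), Xv_app_left y z hab ha (by omega)]

lemma sig_app0 (y : Fin a → Fin r) (z : Fin 0 → Fin r) (ha : 0 < a) :
    sig (app y z) = sig y := by
  have hab : 0 < a + 0 := by omega
  rw [sig_eq_range hab (app y z), sig_eq_range ha y]
  refine Finset.sum_congr rfl fun i hi => ?_
  rw [Finset.mem_range] at hi
  rw [Xv_app_left y z hab ha (by omega)]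

end Blocks

lemma blocks (d r : ℕ) (hd : 0 < d) (ζ ξ : ℂ) (hζ1 : ζ ^ d = 1) :
    ∀ m n : ℕ, n = d * m →
      ∑ x : Fin n → Fin r, ζ ^ gam x * ξ ^ sig x
        = (∑ y : Fin d → Fin r, ζ ^ gam y * ξ ^ sig y) ^ m := by
  intro m
  induction m with
  | zero =>
    intro n h
    simp only [Nat.mul_zero] at h
    subst h
    rw [pow_zero]
    rw [Fintype.sum_unique]
    have hg : gam (default : Fin 0 → Fin r) = 0 := by
      rw [gam]
      exact Finset.sum_of_isEmpty _
    have hs : sig (default : Fin 0 → Fin r) = 0 := by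
      rw [sig]
      exact Finset.sum_of_isEmpty _
    rw [hg, hs, pow_zero, pow_zero, mul_one]
  | succ m ih =>
    intro n h
    have h' : n = d + d * m := by rw [h]; ring
    subst h'
    by_cases hm : m = 0
    · subst hm
      rw [pow_one]
      rw [sum_app (fun x => ζ ^ gam x * ξ ^ sig x)]
      haveI : IsEmpty (Fin (d * 0)) := by rw [Nat.mul_zero]; infer_instance
      refine Finset.sum_congr rfl fun y _ => ?_
      rw [Fintype.sum_unique]
      rw [gam_app0 y _ hd, sig_app0 y _ hd]
    · rw [sum_app (fun x => ζ ^ gam x * ξ ^ sig x)]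
      have hstep : ∀ (y : Fin d → Fin r) (z : Fin (d*m) → Fin r),
          ζ ^ gam (app y z) * ξ ^ sig (app y z)
            = (ζ ^ gam y * ξ ^ sig y) * (ζ ^ gam z * ξ ^ sig z) := by
        intro y z
        obtain ⟨c, hc⟩ := gam_app y z hd (Nat.mul_pos hd (Nat.pos_of_ne_zero hm))
        rw [hc, sig_app y z hd (Nat.mul_pos hd (Nat.pos_of_ne_zero hm)), pow_add, pow_add,
          pow_add, pow_mul, hζ1, one_pow, mul_one]
        ring
      calc ∑ y : Fin d → Fin r, ∑ z : Fin (d*m) → Fin r,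
            ζ ^ gam (app y z) * ξ ^ sig (app y z)
          = ∑ y : Fin d → Fin r, (ζ ^ gam y * ξ ^ sig y) *
              ∑ z : Fin (d*m) → Fin r, ζ ^ gam z * ξ ^ sig z := by
            refine Finset.sum_congr rfl fun y _ => ?_
            rw [Finset.mul_sum]
            exact Finset.sum_congr rfl fun z _ => hstep y z
        _ = (∑ y : Fin d → Fin r, ζ ^ gam y * ξ ^ sig y) ^ (m + 1) := by
            rw [← Finset.sum_mul, ih (d*m) rfl, pow_succ]
            ring

lemma card_multiples_lt (s g : ℕ) (hs : 0 < s) :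
    ((range (s * g)).filter (fun k => s ∣ k)).card = g := by
  have hcard : ((range (s * g)).filter (fun k => s ∣ k)).card = (range g).card := by
    apply Finset.card_bij' (fun k _ => k / s) (fun t _ => s * t)
    · intro k hk
      rw [Finset.mem_filter, Finset.mem_range] at hk
      rw [Finset.mem_range]
      exact Nat.div_lt_of_lt_mul hk.1
    · intro t ht
      rw [Finset.mem_range] at ht
      rw [Finset.mem_filter, Finset.mem_range]
      exact ⟨(Nat.mul_lt_mul_left hs).2 ht, Dvd.intro t rfl⟩
    · intro k hk
      rw [Finset.mem_filter] at hk
      exact Nat.mul_div_cancel' hk.2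
    · intro t _
      exact Nat.mul_div_cancel_left t hs
  rw [hcard, Finset.card_range]

lemma card_dvd_filter (r d : ℕ) (hr : 0 < r) :
    ((range r).filter (fun k => r ∣ k * d)).card = Nat.gcd r d := by
  set g := Nat.gcd r d with hg
  have hgpos : 0 < g := Nat.gcd_pos_of_pos_left _ hr
  set s := r / g with hs
  have hsg : s * g = r := Nat.div_mul_cancel (Nat.gcd_dvd_left r d)
  have hspos : 0 < s := by
    rcases Nat.eq_zero_or_pos s with h | h
    · rw [h, zero_mul] at hsg; omega
    · exact h
  have hiff : ∀ k, r ∣ k * d ↔ s ∣ k := by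
    intro k
    constructor
    · intro hk
      have hd' : g * (d / g) = d := Nat.mul_div_cancel' (Nat.gcd_dvd_right r d)
      have h2 : s * g ∣ (k * (d / g)) * g := by
        rw [hsg]
        have : (k * (d / g)) * g = k * d := by rw [mul_assoc, mul_comm (d/g) g, hd']
        rw [this]
        exact hk
      have h3 : s ∣ k * (d / g) := (Nat.mul_dvd_mul_iff_right hgpos).1 h2
      have hcop : Nat.Coprime s (d / g) := by
        have := Nat.coprime_div_gcd_div_gcd (m := r) (n := d) hgpos
        exact this
      exact hcop.dvd_of_dvd_mul_right h3
    · rintro ⟨u, rfl⟩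
      have hd' : g * (d / g) = d := Nat.mul_div_cancel' (Nat.gcd_dvd_right r d)
      have key : s * u * d = s * g * (u * (d / g)) := by
        conv_lhs => rw [← hd']
        ring
      exact ⟨u * (d / g), by rw [← hsg]; exact key⟩
  rw [Finset.filter_congr (fun k _ => hiff k), ← hsg,
    card_multiples_lt s g hspos]

lemma card_gcd_fiber (n e : ℕ) (hn : 0 < n) (he : e ∣ n) :
    ((range n).filter (fun j => Nat.gcd n j = e)).card = Nat.totient (n / e) := by
  have hepos : 0 < e := by
    rcases Nat.eq_zero_or_pos e with h | h
    · subst h; obtain ⟨c, rfl⟩ := he; simp at hn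
    · exact h
  rw [Nat.totient_eq_card_coprime]
  apply Finset.card_bij' (fun j _ => j / e) (fun u _ => e * u)
  · intro j hj
    rw [Finset.mem_filter, Finset.mem_range] at hj
    obtain ⟨hjn, hgcd⟩ := hj
    have hej : e ∣ j := hgcd ▸ Nat.gcd_dvd_right n j
    rw [Finset.mem_filter, Finset.mem_range]
    constructor
    · exact Nat.div_lt_div_of_lt_of_dvd he hjn
    · have := Nat.coprime_div_gcd_div_gcd (m := n) (n := j) (hgcd ▸ hepos)
      rw [hgcd] at this
      exact this
  · intro u hu
    rw [Finset.mem_filter, Finset.mem_range] at hu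
    obtain ⟨hun, hcop⟩ := hu
    rw [Finset.mem_filter, Finset.mem_range]
    constructor
    · calc e * u < e * (n / e) := (Nat.mul_lt_mul_left hepos).2 hun
        _ = n := Nat.mul_div_cancel' he
    · conv_lhs => rw [← Nat.mul_div_cancel' he]
      rw [Nat.gcd_mul_left, hcop, mul_one]
  · intro j hj
    rw [Finset.mem_filter] at hj
    exact Nat.mul_div_cancel' (hj.2 ▸ Nat.gcd_dvd_right n j)
  · intro u _
    exact Nat.mul_div_cancel_left u hepos

lemma pow_eq_pow_iff_modEq' {N : ℕ} {ζ : ℂ} (hζ : IsPrimitiveRoot ζ N) (hζ0 : ζ ≠ 0)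
    (a b : ℕ) : ζ ^ a = ζ ^ b ↔ a ≡ b [MOD N] := by
  have key : ∀ u v : ℕ, u ≤ v → (ζ ^ u = ζ ^ v ↔ u ≡ v [MOD N]) := by
    intro u v huv
    rw [Nat.modEq_iff_dvd' huv, ← hζ.pow_eq_one_iff_dvd]
    constructor
    · intro he
      have hv : ζ ^ v = ζ ^ u * ζ ^ (v - u) := by rw [← pow_add]; congr 1; omega
      rw [hv] at he
      have := mul_left_cancel₀ (pow_ne_zero u hζ0) (by rw [← he, mul_one] : ζ ^ u * 1 = ζ ^ u * ζ ^ (v - u))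
      exact this.symm
    · intro h1
      have hv : ζ ^ v = ζ ^ u * ζ ^ (v - u) := by rw [← pow_add]; congr 1; omega
      rw [hv, h1, mul_one]
  rcases le_total a b with h | h
  · exact key a b h
  · rw [eq_comm, Nat.ModEq.comm]
    exact key b a h

lemma orth {N : ℕ} (hN : 0 < N) {ζ : ℂ} (hζ : IsPrimitiveRoot ζ N) (a b : ℕ) :
    ∑ j ∈ range N, ζ ^ (j * a) * (ζ ^ (j * b))⁻¹
      = if a ≡ b [MOD N] then (N : ℂ) else 0 := by
  have hζ0 : ζ ≠ 0 := hζ.ne_zero hN.ne'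
  have hb0 : ζ ^ b ≠ 0 := pow_ne_zero _ hζ0
  have hsummand : ∀ j : ℕ, ζ ^ (j * a) * (ζ ^ (j * b))⁻¹ = (ζ ^ a * (ζ ^ b)⁻¹) ^ j := by
    intro j
    rw [mul_comm j a, mul_comm j b, pow_mul, pow_mul, mul_pow, inv_pow]
  have hw : (ζ ^ a * (ζ ^ b)⁻¹) ^ N = 1 := by
    rw [mul_pow, inv_pow, ← pow_mul, ← pow_mul, mul_comm a N, mul_comm b N,
      pow_mul, pow_mul, hζ.pow_eq_one, one_pow, one_pow, inv_one, mul_one]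
  rw [Finset.sum_congr rfl fun j _ => hsummand j, geom_root N _ hw]
  have hcond : (ζ ^ a * (ζ ^ b)⁻¹ = 1) = (a ≡ b [MOD N]) := by
    rw [mul_inv_eq_one₀ hb0, pow_eq_pow_iff_modEq' hζ hζ0]
  simp only [hcond]

theorem stmt_6 (n r : ℕ) (hn : 0 < n) (hr : 0 < r) :
    (∀ a₁ a₂ : ℕ, a₁ < n → a₂ < r → (Tcode n r a₁ a₂).card ≤ (Tcode n r 0 0).card) ∧
    (((Tcode n r 0 0).card : ℂ)
      = (1 / ((n : ℂ) * (r : ℂ))) *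
          ∑ d ∈ n.divisors, (Nat.totient d : ℂ) * (r : ℂ) ^ (n / d) * (Nat.gcd r d : ℂ)) := by
  have hnC : (n : ℂ) ≠ 0 := Nat.cast_ne_zero.2 hn.ne'
  have hrC : (r : ℂ) ≠ 0 := Nat.cast_ne_zero.2 hr.ne'
  set ζn : ℂ := Complex.exp (2 * (Real.pi : ℂ) * Complex.I / n) with hζndef
  set ζr : ℂ := Complex.exp (2 * (Real.pi : ℂ) * Complex.I / r) with hζrdef
  have hζn : IsPrimitiveRoot ζn n := Complex.isPrimitiveRoot_exp n hn.ne'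
  have hζr : IsPrimitiveRoot ζr r := Complex.isPrimitiveRoot_exp r hr.ne'
  have habsn : ‖ζn‖ = 1 := by
    rw [hζndef, show 2 * (Real.pi : ℂ) * Complex.I / n = ((2 * Real.pi / n : ℝ) : ℂ) * Complex.I by
      push_cast; ring]
    exact Complex.norm_exp_ofReal_mul_I _
  have habsr : ‖ζr‖ = 1 := by
    rw [hζrdef, show 2 * (Real.pi : ℂ) * Complex.I / r = ((2 * Real.pi / r : ℝ) : ℂ) * Complex.I by
      push_cast; ring]
    exact Complex.norm_exp_ofReal_mul_I _
  -- the closed form of the character sums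
  set N : ℕ → ℕ → ℕ := fun j k =>
    if r ∣ k * (n / Nat.gcd n j) then r ^ (Nat.gcd n j) else 0 with hNdef
  have hS : ∀ j k : ℕ, (∑ x : Fin n → Fin r, ζn ^ (j * gam x) * ζr ^ (k * sig x)) = (N j k : ℂ) := by
    intro j k
    set g := Nat.gcd n j with hgdef
    set dd := n / g with hddef
    have hgpos : 0 < g := Nat.gcd_pos_of_pos_left _ hn
    have hdpos : 0 < dd := Nat.div_pos (Nat.le_of_dvd hn (Nat.gcd_dvd_left n j)) hgpos
    have hdg : dd * g = n := Nat.div_mul_cancel (Nat.gcd_dvd_left n j)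
    have hjg : g * (j / g) = j := Nat.mul_div_cancel' (Nat.gcd_dvd_right n j)
    have hζ1 : (ζn ^ j) ^ dd = 1 := by
      rw [← pow_mul, hζn.pow_eq_one_iff_dvd]
      refine ⟨j / g, ?_⟩
      calc j * dd = g * (j / g) * dd := by rw [hjg]
        _ = dd * g * (j / g) := by ring
        _ = n * (j / g) := by rw [hdg]
    have hζ2 : ∀ t, (ζn ^ j) ^ t = 1 → dd ∣ t := by
      intro t ht
      rw [← pow_mul, hζn.pow_eq_one_iff_dvd] at ht
      rw [← hdg] at ht
      have heq : g * ((j / g) * t) = j * t := by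
        calc g * ((j / g) * t) = g * (j / g) * t := by ring
          _ = j * t := by rw [hjg]
      have ht2 : g * dd ∣ g * ((j / g) * t) := by
        rw [heq, mul_comm g dd]
        exact ht
      have ht3 : dd ∣ (j / g) * t := (Nat.mul_dvd_mul_iff_left hgpos).1 ht2
      have hcop : Nat.Coprime dd (j / g) := Nat.coprime_div_gcd_div_gcd hgpos
      exact hcop.dvd_of_dvd_mul_left ht3
    have hξr : (ζr ^ k) ^ r = 1 := by
      rw [← pow_mul, hζr.pow_eq_one_iff_dvd]
      exact ⟨k, mul_comm k r⟩
    have hpoint : (∑ x : Fin n → Fin r, ζn ^ (j * gam x) * ζr ^ (k * sig x))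
        = ∑ x : Fin n → Fin r, (ζn ^ j) ^ gam x * (ζr ^ k) ^ sig x :=
      Finset.sum_congr rfl fun x _ => by rw [← pow_mul, ← pow_mul]
    rw [hpoint, blocks dd r hdpos (ζn ^ j) (ζr ^ k) hζ1 g n hdg.symm,
      Td_val hdpos (ζn ^ j) (ζr ^ k) hζ1 hζ2 hξr]
    have hcond : ((ζr ^ k) ^ dd = 1) ↔ (r ∣ k * dd) := by
      rw [← pow_mul, hζr.pow_eq_one_iff_dvd]
    by_cases hc : r ∣ k * dd
    · rw [if_pos (hcond.2 hc), hNdef]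
      simp only [if_pos (show r ∣ k * (n / n.gcd j) from hc)]
      rw [← hgdef]
      push_cast
      ring
    · rw [if_neg (fun hh => hc (hcond.1 hh)), hNdef]
      simp only [if_neg (show ¬ r ∣ k * (n / n.gcd j) from hc)]
      rw [zero_pow hgpos.ne', Nat.cast_zero]
  -- master orthogonality identity
  have hmaster : ∀ a1 a2 : ℕ,
      ∑ j ∈ range n, ∑ k ∈ range r, (ζn ^ (j * a1))⁻¹ * (ζr ^ (k * a2))⁻¹ * (N j k : ℂ)
        = ((Tcode n r a1 a2).card : ℂ) * ((n : ℂ) * (r : ℂ)) := by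
    intro a1 a2
    calc ∑ j ∈ range n, ∑ k ∈ range r, (ζn ^ (j * a1))⁻¹ * (ζr ^ (k * a2))⁻¹ * (N j k : ℂ)
        = ∑ j ∈ range n, ∑ k ∈ range r, ∑ x : Fin n → Fin r,
            (ζn ^ (j * gam x) * (ζn ^ (j * a1))⁻¹) * (ζr ^ (k * sig x) * (ζr ^ (k * a2))⁻¹) := by
          refine Finset.sum_congr rfl fun j _ => Finset.sum_congr rfl fun k _ => ?_
          rw [← hS j k, Finset.mul_sum]
          exact Finset.sum_congr rfl fun x _ => by ring
      _ = ∑ x : Fin n → Fin r,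
            (∑ j ∈ range n, ζn ^ (j * gam x) * (ζn ^ (j * a1))⁻¹) *
            (∑ k ∈ range r, ζr ^ (k * sig x) * (ζr ^ (k * a2))⁻¹) := by
          have step1 : ∀ j, ∑ k ∈ range r, ∑ x : Fin n → Fin r,
              (ζn ^ (j * gam x) * (ζn ^ (j * a1))⁻¹) * (ζr ^ (k * sig x) * (ζr ^ (k * a2))⁻¹)
              = ∑ x : Fin n → Fin r, (ζn ^ (j * gam x) * (ζn ^ (j * a1))⁻¹) *
                  ∑ k ∈ range r, (ζr ^ (k * sig x) * (ζr ^ (k * a2))⁻¹) := by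
            intro j
            rw [Finset.sum_comm]
            exact Finset.sum_congr rfl fun x _ => (Finset.mul_sum _ _ _).symm
          rw [Finset.sum_congr rfl fun j _ => step1 j, Finset.sum_comm]
          exact Finset.sum_congr rfl fun x _ => (Finset.sum_mul _ _ _).symm
      _ = ∑ x : Fin n → Fin r,
            (if gam x ≡ a1 [MOD n] then (n:ℂ) else 0) *
            (if sig x ≡ a2 [MOD r] then (r:ℂ) else 0) := by
          refine Finset.sum_congr rfl fun x _ => ?_
          rw [orth hn hζn, orth hr hζr]
      _ = ∑ x : Fin n → Fin r,
            (if (gam x ≡ a1 [MOD n] ∧ sig x ≡ a2 [MOD r]) then ((n:ℂ) * (r:ℂ)) else 0) := by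
          refine Finset.sum_congr rfl fun x _ => ?_
          by_cases h1 : gam x ≡ a1 [MOD n] <;> by_cases h2 : sig x ≡ a2 [MOD r] <;>
            simp [h1, h2]
      _ = ((Tcode n r a1 a2).card : ℂ) * ((n : ℂ) * (r : ℂ)) := by
          rw [Tcode, ← Finset.sum_filter, Finset.sum_const, nsmul_eq_mul]
  -- nat identity for the (0,0) class
  have h00 : (Tcode n r 0 0).card * (n * r) = ∑ j ∈ range n, ∑ k ∈ range r, N j k := by
    have h0 := hmaster 0 0
    simp only [Nat.mul_zero, pow_zero, inv_one, one_mul] at h0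
    have : ((∑ j ∈ range n, ∑ k ∈ range r, N j k : ℕ) : ℂ)
        = (((Tcode n r 0 0).card * (n * r) : ℕ) : ℂ) := by
      push_cast
      rw [h0]
    exact_mod_cast this.symm
  constructor
  · -- part 1: maximality of the (0,0) class
    intro a1 a2 _ _
    have habs : (((Tcode n r a1 a2).card * (n * r) : ℕ) : ℝ)
        ≤ (((Tcode n r 0 0).card * (n * r) : ℕ) : ℝ) := by
      have e1 : (((Tcode n r a1 a2).card * (n * r) : ℕ) : ℂ)
          = ((Tcode n r a1 a2).card : ℂ) * ((n : ℂ) * (r : ℂ)) := by push_cast; ring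
      have e2 : (((Tcode n r a1 a2).card * (n * r) : ℕ) : ℝ)
          = ‖((Tcode n r a1 a2).card : ℂ) * ((n:ℂ) * (r:ℂ))‖ := by
        rw [← e1, Complex.norm_natCast]
      rw [e2, ← hmaster a1 a2]
      calc ‖(∑ j ∈ range n, ∑ k ∈ range r,
              (ζn ^ (j * a1))⁻¹ * (ζr ^ (k * a2))⁻¹ * (N j k : ℂ))‖
          ≤ ∑ j ∈ range n, ‖(∑ k ∈ range r,
              (ζn ^ (j * a1))⁻¹ * (ζr ^ (k * a2))⁻¹ * (N j k : ℂ))‖ :=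
            norm_sum_le _ _
        _ ≤ ∑ j ∈ range n, ∑ k ∈ range r,
              ‖((ζn ^ (j * a1))⁻¹ * (ζr ^ (k * a2))⁻¹ * (N j k : ℂ))‖ :=
            Finset.sum_le_sum fun j _ => norm_sum_le _ _
        _ = ∑ j ∈ range n, ∑ k ∈ range r, (N j k : ℝ) := by
            refine Finset.sum_congr rfl fun j _ => Finset.sum_congr rfl fun k _ => ?_
            rw [norm_mul, norm_mul, norm_inv, norm_inv, norm_pow, norm_pow, habsn, habsr,
              one_pow, one_pow, inv_one, one_mul, one_mul, Complex.norm_natCast]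
        _ = (((Tcode n r 0 0).card * (n * r) : ℕ) : ℝ) := by
            rw [h00]
            push_cast
            rfl
    have hnatle : (Tcode n r a1 a2).card * (n * r) ≤ (Tcode n r 0 0).card * (n * r) := by
      exact_mod_cast habs
    exact Nat.le_of_mul_le_mul_right hnatle (Nat.mul_pos hn hr)
  · -- part 2: the counting formula
    have hsum : ∑ j ∈ range n, ∑ k ∈ range r, N j k
        = ∑ d ∈ n.divisors, Nat.totient d * (r ^ (n / d) * Nat.gcd r d) := by
      have hinner : ∀ j, ∑ k ∈ range r, N j k
          = r ^ (Nat.gcd n j) * Nat.gcd r (n / Nat.gcd n j) := by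
        intro j
        rw [hNdef]
        simp only
        rw [Finset.sum_ite, Finset.sum_const, Finset.sum_const_zero, add_zero, smul_eq_mul,
          card_dvd_filter r (n / Nat.gcd n j) hr]
        ring
      rw [Finset.sum_congr rfl fun j _ => hinner j]
      rw [← Finset.sum_fiberwise_of_maps_to
        (fun j (_ : j ∈ range n) => Nat.mem_divisors.2 ⟨Nat.gcd_dvd_left n j, hn.ne'⟩)
        (fun j => r ^ (Nat.gcd n j) * Nat.gcd r (n / Nat.gcd n j))]
      have hfib : ∀ e ∈ n.divisors,
          ∑ j ∈ (range n).filter (fun j => Nat.gcd n j = e),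
            r ^ (Nat.gcd n j) * Nat.gcd r (n / Nat.gcd n j)
          = Nat.totient (n / e) * (r ^ e * Nat.gcd r (n / e)) := by
        intro e he
        obtain ⟨hed, -⟩ := Nat.mem_divisors.1 he
        rw [Finset.sum_congr rfl (fun j hj => by
          rw [(Finset.mem_filter.1 hj).2]), Finset.sum_const,
          card_gcd_fiber n e hn hed, smul_eq_mul]
      rw [Finset.sum_congr rfl hfib]
      have hreindex := Nat.sum_div_divisors n
        (fun d => Nat.totient d * (r ^ (n / d) * Nat.gcd r d))
      rw [← hreindex]
      refine Finset.sum_congr rfl fun e he => ?_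
      obtain ⟨hed, -⟩ := Nat.mem_divisors.1 he
      rw [Nat.div_div_self hed hn.ne']
    have hfinal : ((Tcode n r 0 0).card : ℂ) * ((n : ℂ) * (r : ℂ))
        = ∑ d ∈ n.divisors, (Nat.totient d : ℂ) * (r : ℂ) ^ (n / d) * (Nat.gcd r d : ℂ) := by
      have : (((Tcode n r 0 0).card * (n * r) : ℕ) : ℂ)
          = ((∑ d ∈ n.divisors, Nat.totient d * (r ^ (n / d) * Nat.gcd r d) : ℕ) : ℂ) := by
        rw [h00, hsum]
      push_cast at this
      rw [this]
      exact Finset.sum_congr rfl fun d _ => by ring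
    rw [← hfinal]
    field_simp
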